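/- Let A be a square rational matrix, ε = ±1, and suppose w is a complex number with |w| = 1, w ≠ 1, and k an integer with w^k ≠ 1 and w^{k+1} ≠ 1. Then the Hermitian 2n×2n matrix [[ (w^k A − ε Aᵀ)/(w^k − 1), A ], [ ε Aᵀ, (w A − ε Aᵀ)/(w − 1) ]] (made Hermitian by multiplying by i if ε = 1 as appropriate) is congruent over ℂ to the block sum of ( (w^{k+1}−1)(A − ε Aᵀ) ) / ( (w−1)(w^k−1) ) and (w^{k+1} A − ε Aᵀ)/(w^{k+1} − 1). -/

import Mathlib

/-- Two square complex matrices are congruent if `Q = M * P * Mᴴ` for some invertible `M`. -/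
def MatCongruent {m : Type*} [Fintype m] [DecidableEq m]
    (P Q : Matrix m m ℂ) : Prop :=
  ∃ M : Matrix m m ℂ, IsUnit M.det ∧ Q = M * P * M.conjTranspose

set_option maxHeartbeats 1600000

private lemma key_congr {m : Type*} [Fintype m] [DecidableEq m]
    (P11 P12 P21 P22 : Matrix m m ℂ) (t s : ℂ) (hs : star t = s) :
    ((Matrix.fromBlocks 1 0 (t • 1) 1 * Matrix.fromBlocks 1 (-1) 0 1 :
        Matrix (m ⊕ m) (m ⊕ m) ℂ)) *
      Matrix.fromBlocks P11 P12 P21 P22 *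
      (Matrix.fromBlocks 1 0 (t • 1) 1 * Matrix.fromBlocks 1 (-1) 0 1 :
        Matrix (m ⊕ m) (m ⊕ m) ℂ).conjTranspose
    = Matrix.fromBlocks
        (P11 - P21 - (P12 - P22))
        (s • (P11 - P21) + (1 - s) • (P12 - P22))
        (t • (P11 - P12) + (1 - t) • (P21 - P22))
        (s • (t • P11 + (1 - t) • P21) + (1 - s) • (t • P12 + (1 - t) • P22)) := by
  rw [Matrix.conjTranspose_mul, Matrix.fromBlocks_conjTranspose,
    Matrix.fromBlocks_conjTranspose]
  simp only [Matrix.conjTranspose_one, Matrix.conjTranspose_zero, Matrix.conjTranspose_neg,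
    Matrix.conjTranspose_smul, hs, Matrix.fromBlocks_multiply, Matrix.one_mul,
    Matrix.mul_one, Matrix.zero_mul, Matrix.mul_zero, Matrix.smul_mul, Matrix.mul_smul,
    Matrix.neg_mul, Matrix.mul_neg, Matrix.add_mul, Matrix.mul_add, add_zero, zero_add]
  rw [Matrix.fromBlocks_inj]
  refine ⟨by module, by module, by module, by module⟩

/-- for a rational square matrix `A`, `ε = ±1`, `w` on the unit circle with
`w ≠ 1`, and an integer `k` with `w^k ≠ 1` and `w^{k+1} ≠ 1`, the block matrix
`[[ (w^k A − ε Aᵀ)/(w^k − 1), A ], [ ε Aᵀ, (w A − ε Aᵀ)/(w − 1) ]]` is congruent over `ℂ`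
to the block sum of `((w^{k+1}−1)(A − ε Aᵀ))/((w−1)(w^k−1))` and
`(w^{k+1} A − ε Aᵀ)/(w^{k+1} − 1)`. -/
theorem block_congruence {n : ℕ} (A : Matrix (Fin n) (Fin n) ℚ) (ε : ℂ)
    (hε : ε = 1 ∨ ε = -1) (w : ℂ) (habs : ‖w‖ = 1) (hw1 : w ≠ 1)
    (k : ℤ) (hk : w ^ k ≠ 1) (hk1 : w ^ (k + 1) ≠ 1) :
    MatCongruent
      (Matrix.fromBlocks
        ((w ^ k - 1)⁻¹ • (w ^ k • (A.map fun q => (q : ℂ)) -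
          ε • (A.map fun q => (q : ℂ)).transpose))
        (A.map fun q => (q : ℂ))
        (ε • (A.map fun q => (q : ℂ)).transpose)
        ((w - 1)⁻¹ • (w • (A.map fun q => (q : ℂ)) -
          ε • (A.map fun q => (q : ℂ)).transpose)))
      (Matrix.fromBlocks
        (((w ^ (k + 1) - 1) / ((w - 1) * (w ^ k - 1))) •
          ((A.map fun q => (q : ℂ)) - ε • (A.map fun q => (q : ℂ)).transpose))
        0 0
        ((w ^ (k + 1) - 1)⁻¹ • (w ^ (k + 1) • (A.map fun q => (q : ℂ)) -
          ε • (A.map fun q => (q : ℂ)).transpose))) := by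
  have hw0 : w ≠ 0 := by
    intro h; rw [h] at habs; simp at habs
  have hpow : w ^ (k + 1) = w ^ k * w := zpow_add_one₀ hw0 k
  rw [hpow] at hk1 ⊢
  set u : ℂ := w ^ k with hu
  have hu0 : u ≠ 0 := zpow_ne_zero k hw0
  have h1 : w - 1 ≠ 0 := sub_ne_zero.mpr hw1
  have h2 : u - 1 ≠ 0 := sub_ne_zero.mpr hk
  have h3 : u * w - 1 ≠ 0 := sub_ne_zero.mpr hk1
  set t : ℂ := w * (u - 1) / (u * w - 1) with ht
  set s : ℂ := (u - 1) / (u * w - 1) with hsdef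
  have hcw : (starRingEnd ℂ) w = w⁻¹ := by
    have h := Complex.mul_conj w
    rw [Complex.normSq_eq_norm_sq, habs] at h
    field_simp
    rw [mul_comm] at h
    simpa using h
  have hcu : (starRingEnd ℂ) u = u⁻¹ := by
    rw [hu, map_zpow₀, hcw, ← inv_zpow]
  have hs : star t = s := by
    have d1 : u⁻¹ * w⁻¹ - 1 ≠ 0 := by
      rw [sub_ne_zero]
      intro h
      apply h3
      rw [sub_eq_zero]
      field_simp at h
      linear_combination -h
    rw [ht, hsdef, Complex.star_def, map_div₀, map_mul, map_sub, map_sub, map_one, map_mul,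
      hcw, hcu, div_eq_div_iff d1 h3]
    field_simp
    ring
  refine ⟨(Matrix.fromBlocks 1 0 (t • 1) 1 * Matrix.fromBlocks 1 (-1) 0 1 :
      Matrix (Fin n ⊕ Fin n) (Fin n ⊕ Fin n) ℂ), ?_, ?_⟩
  · rw [Matrix.det_mul, Matrix.det_fromBlocks_zero₁₂, Matrix.det_fromBlocks_zero₂₁]
    simp
  · rw [key_congr _ _ _ _ t s hs, Matrix.fromBlocks_inj]
    refine ⟨?_, ?_, ?_, ?_⟩ <;>
    · match_scalars <;> (try simp only [ht, hsdef]) <;> field_simp [show w * u - 1 ≠ 0 by rwa [mul_comm]] <;>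
        (try rw [eq_div_iff (by simp [h1, h2, h3, mul_ne_zero])]) <;> ring
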